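/- If the pair (X₁,Y₁) is independent of the pair (X₂,Y₂), then G_NNI(X₁,X₂; Y₁,Y₂) ≥ G_NNI(X₁;Y₁) + G_NNI(X₂;Y₂), and the analogous superadditivity inequalities hold for G_PNI and for G_PPI. -/
import Mathlib


open scoped BigOperators Pointwise Classical

noncomputable section

namespace GW

/-- A probability mass function on a finite type. -/
def IsPMF {α : Type} [Fintype α] (p : α → ℝ) : Prop :=
  (∀ a, 0 ≤ p a) ∧ ∑ a, p a = 1

/-- Distribution (pmf) of the random variable `f` under the pmf `p`. -/
def dist {α β : Type} [Fintype α] (p : α → ℝ) (f : α → β) : β → ℝ :=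
  fun b => ∑ a, if f a = b then p a else 0

/-- Shannon entropy (base 2) of the random variable `f` under the pmf `p`. -/
def H {α β : Type} [Fintype α] [Fintype β] (p : α → ℝ) (f : α → β) : ℝ :=
  ∑ b, -(dist p f b * Real.logb 2 (dist p f b))

/-- Mutual information `I(f; g)` under `p`. -/
def I2 {α β γ : Type} [Fintype α] [Fintype β] [Fintype γ]
    (p : α → ℝ) (f : α → β) (g : α → γ) : ℝ :=
  H p f + H p g - H p (fun a => (f a, g a))

/-- Conditional entropy `H(f | g)` under `p`. -/
def Hc {α β γ : Type} [Fintype α] [Fintype β] [Fintype γ]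
    (p : α → ℝ) (f : α → β) (g : α → γ) : ℝ :=
  H p (fun a => (f a, g a)) - H p g

/-- Conditional mutual information `I(f; g | h)` under `p`. -/
def Ic {α β γ δ : Type} [Fintype α] [Fintype β] [Fintype γ] [Fintype δ]
    (p : α → ℝ) (f : α → β) (g : α → γ) (h : α → δ) : ℝ :=
  Hc p f h + Hc p g h - Hc p (fun a => (f a, g a)) h

/-- Independence of the random variables `f` and `g` under `p`. -/
def Indep {α β γ : Type} [Fintype α] (p : α → ℝ) (f : α → β) (g : α → γ) : Prop :=
  ∀ b c, dist p (fun a => (f a, g a)) (b, c) = dist p f b * dist p g c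

/-- `q` is a joint pmf on `X × Y × U` whose `(X,Y)`-marginal is `p`; i.e. `U` is an
auxiliary random variable defined jointly with `(X,Y)` via a conditional pmf `p_{U|XY}`. -/
def IsAux {X Y U : Type} [Fintype X] [Fintype Y] [Fintype U]
    (p : X × Y → ℝ) (q : X × Y × U → ℝ) : Prop :=
  IsPMF q ∧ ∀ x y, (∑ u, q (x, y, u)) = p (x, y)

/-- Coordinate map onto `X`. -/
def cX {X Y U : Type} : X × Y × U → X := fun a => a.1
/-- Coordinate map onto `Y`. -/
def cY {X Y U : Type} : X × Y × U → Y := fun a => a.2.1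
/-- Coordinate map onto `U`. -/
def cU {X Y U : Type} : X × Y × U → U := fun a => a.2.2
/-- Coordinate map onto `X × Y`. -/
def cXY {X Y U : Type} : X × Y × U → X × Y := fun a => (a.1, a.2.1)

/-- The mutual information region `𝓘_{XY}`. -/
def MIRegion {X Y : Type} [Fintype X] [Fintype Y] (p : X × Y → ℝ) : Set (ℝ × ℝ × ℝ) :=
  { v | ∃ (U : Type) (_ : Fintype U) (q : X × Y × U → ℝ), IsAux p q ∧
      v = (I2 q cX cU, I2 q cY cU, I2 q cXY cU) }

/-- The outer region `𝓘ᵒ_{XY}`. -/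
def OuterRegion {X Y : Type} [Fintype X] [Fintype Y] (p : X × Y → ℝ) : Set (ℝ × ℝ × ℝ) :=
  { v | 0 ≤ v.1 ∧ 0 ≤ v.2.1 ∧ v.1 + v.2.1 - v.2.2 ≤ I2 p Prod.fst Prod.snd ∧
        0 ≤ v.2.2 - v.2.1 ∧ v.2.2 - v.2.1 ≤ Hc p Prod.fst Prod.snd ∧
        0 ≤ v.2.2 - v.1 ∧ v.2.2 - v.1 ≤ Hc p Prod.snd Prod.fst }

/-- Maximal interaction information `G_NNI(X; Y)`. -/
def GNNI {X Y : Type} [Fintype X] [Fintype Y] (p : X × Y → ℝ) : ℝ :=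
  sSup { r | ∃ (U : Type) (_ : Fintype U) (q : X × Y × U → ℝ), IsAux p q ∧
      r = Ic q cX cY cU - I2 p Prod.fst Prod.snd }

/-- Asymmetric private interaction information `G_PNI(X → Y)`. -/
def GPNI {X Y : Type} [Fintype X] [Fintype Y] (p : X × Y → ℝ) : ℝ :=
  sSup { r | ∃ (U : Type) (_ : Fintype U) (q : X × Y × U → ℝ), IsAux p q ∧
      Indep q cU cX ∧ r = Ic q cX cY cU - I2 p Prod.fst Prod.snd }

/-- Symmetric private interaction information `G_PPI(X; Y)`. -/
def GPPI {X Y : Type} [Fintype X] [Fintype Y] (p : X × Y → ℝ) : ℝ :=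
  sSup { r | ∃ (U : Type) (_ : Fintype U) (q : X × Y × U → ℝ), IsAux p q ∧
      Indep q cU cX ∧ Indep q cU cY ∧ r = Ic q cX cY cU - I2 p Prod.fst Prod.snd }


set_option linter.unusedSectionVars false
set_option maxHeartbeats 1000000

section Helpers
variable {α β γ : Type} [Fintype α] [Fintype β] [Fintype γ]

lemma dist_nonneg' {p : α → ℝ} (hp : ∀ a, 0 ≤ p a) (f : α → β) (b : β) :
    0 ≤ dist p f b :=
  Finset.sum_nonneg fun a _ => by split <;> simp [hp a]

lemma sum_dist (p : α → ℝ) (f : α → β) : ∑ b, dist p f b = ∑ a, p a := by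
  unfold dist
  rw [Finset.sum_comm]
  exact Finset.sum_congr rfl fun a _ => by simp

lemma dist_marg_fst (p : α → ℝ) (f : α → β) (g : α → γ) (b : β) :
    ∑ c, dist p (fun a => (f a, g a)) (b, c) = dist p f b := by
  unfold dist
  rw [Finset.sum_comm]
  refine Finset.sum_congr rfl fun a _ => ?_
  by_cases h : f a = b <;> simp [Prod.ext_iff, h]

lemma dist_marg_snd (p : α → ℝ) (f : α → β) (g : α → γ) (c : γ) :
    ∑ b, dist p (fun a => (f a, g a)) (b, c) = dist p g c := by
  unfold dist
  rw [Finset.sum_comm]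
  refine Finset.sum_congr rfl fun a _ => ?_
  by_cases h : g a = c <;> simp [Prod.ext_iff, h]

lemma dist_le_one {p : α → ℝ} (hp : ∀ a, 0 ≤ p a) (hp1 : ∑ a, p a = 1)
    (f : α → β) (b : β) : dist p f b ≤ 1 := by
  have := Finset.single_le_sum (f := fun b => dist p f b)
    (fun b _ => dist_nonneg' hp f b) (Finset.mem_univ b)
  rw [sum_dist, hp1] at this
  exact this

lemma H_eq_of_dist {α' β' : Type} [Fintype α'] [Fintype β']
    {p : α → ℝ} {f : α → β} {p' : α' → ℝ} {f' : α' → β'} (e : β ≃ β')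
    (h : ∀ b, dist p f b = dist p' f' (e b)) : H p f = H p' f' := by
  unfold H
  rw [← Equiv.sum_comp e (fun b' => -(dist p' f' b' * Real.logb 2 (dist p' f' b')))]
  exact Finset.sum_congr rfl fun b _ => by rw [h]


/-- `-(t * log₂ t) ≤ 2` for `0 ≤ t ≤ 1` (indeed for all `t ≥ 0`). -/
lemma neg_mul_logb_le_two {t : ℝ} (h0 : 0 ≤ t) : -(t * Real.logb 2 t) ≤ 2 := by
  have hlog2 : (1:ℝ)/2 < Real.log 2 := by
    have := Real.log_two_gt_d9; linarith
  have key : -(t * Real.log t) ≤ 1 := by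
    rcases eq_or_lt_of_le h0 with h | h
    · simp [← h]
    · have h1 : Real.log (1/t) ≤ 1/t - 1 := Real.log_le_sub_one_of_pos (by positivity)
      rw [Real.log_div one_ne_zero (ne_of_gt h), Real.log_one] at h1
      have : -(t * Real.log t) ≤ t * (1/t - 1) := by nlinarith
      rw [mul_sub, mul_one_div, div_self (ne_of_gt h)] at this
      linarith
  rw [Real.logb, div_eq_mul_inv, ← mul_assoc]
  have hinv : 0 < (Real.log 2)⁻¹ := by positivity
  have : -(t * Real.log t * (Real.log 2)⁻¹) = -(t * Real.log t) * (Real.log 2)⁻¹ := by ring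
  rw [this]
  calc -(t * Real.log t) * (Real.log 2)⁻¹ ≤ 1 * (Real.log 2)⁻¹ := by
        exact mul_le_mul_of_nonneg_right key (le_of_lt hinv)
    _ ≤ 2 := by
        rw [one_mul]
        rw [inv_le_comm₀ (by linarith) (by norm_num)]
        linarith

lemma H_le_card {p : α → ℝ} (hp : ∀ a, 0 ≤ p a) (f : α → β) :
    H p f ≤ 2 * (Fintype.card β : ℝ) := by
  unfold H
  calc ∑ b, -(dist p f b * Real.logb 2 (dist p f b)) ≤ ∑ _b : β, (2:ℝ) :=
        Finset.sum_le_sum fun b _ => neg_mul_logb_le_two (dist_nonneg' hp f b)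
    _ = 2 * (Fintype.card β : ℝ) := by simp [mul_comm]

/-- superadditivity of `t ↦ -(t log t)` over nonnegative sums. -/
lemma F_sum_le {ι : Type} [Fintype ι] (w : ι → ℝ) (hw : ∀ i, 0 ≤ w i) :
    -((∑ i, w i) * Real.logb 2 (∑ i, w i)) ≤ ∑ i, -(w i * Real.logb 2 (w i)) := by
  rw [Finset.sum_mul, ← Finset.sum_neg_distrib]
  refine Finset.sum_le_sum fun i _ => ?_
  rcases eq_or_lt_of_le (hw i) with h | h
  · simp [← h]
  · have hle : w i ≤ ∑ j, w j :=
      Finset.single_le_sum (fun j _ => hw j) (Finset.mem_univ i)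
    have := Real.logb_le_logb_of_le (b := 2) one_lt_two h hle
    nlinarith


lemma dist_comp (p : α → ℝ) (f : α → β) (φ : β → γ) (c : γ) :
    dist p (fun a => φ (f a)) c = ∑ b, if φ b = c then dist p f b else 0 := by
  unfold dist
  have : ∀ b, (if φ b = c then (∑ a, if f a = b then p a else 0) else 0)
      = ∑ a, if φ b = c then (if f a = b then p a else 0) else 0 := by
    intro b; split <;> simp
  simp_rw [this]
  rw [Finset.sum_comm]
  refine Finset.sum_congr rfl fun a _ => ?_
  by_cases h : φ (f a) = c
  · rw [Finset.sum_eq_single (f a)]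
    · simp [h]
    · intro b _ hb; simp [Ne.symm hb]
    · simp
  · rw [Finset.sum_eq_zero]
    · simp [h]
    · intro b _
      by_cases hb : f a = b
      · subst hb; simp [h]
      · simp only [if_neg hb, ite_self]

/-- entropy decreases under postcomposition (data processing). -/
lemma H_comp_le {p : α → ℝ} (hp : ∀ a, 0 ≤ p a) (f : α → β) (φ : β → γ) :
    H p (fun a => φ (f a)) ≤ H p f := by
  unfold H
  calc ∑ c, -(dist p (fun a => φ (f a)) c * Real.logb 2 (dist p (fun a => φ (f a)) c))
      ≤ ∑ c, ∑ b, -((if φ b = c then dist p f b else 0) *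
          Real.logb 2 (if φ b = c then dist p f b else 0)) := by
        refine Finset.sum_le_sum fun c _ => ?_
        rw [dist_comp p f φ c]
        exact F_sum_le _ fun b => by split <;> simp [dist_nonneg' hp f _]
    _ = ∑ b, -(dist p f b * Real.logb 2 (dist p f b)) := by
        rw [Finset.sum_comm]
        refine Finset.sum_congr rfl fun b _ => ?_
        rw [Finset.sum_eq_single (φ b)]
        · simp
        · intro c _ hc
          rw [if_neg (fun h => hc h.symm)]
          simp
        · simp

lemma H_comp_eq {p : α → ℝ} (hp : ∀ a, 0 ≤ p a) (f : α → β) (φ : β → γ) (ψ : γ → β)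
    (hψ : ∀ b, ψ (φ b) = b) : H p (fun a => φ (f a)) = H p f := by
  refine le_antisymm (H_comp_le hp f φ) ?_
  have := H_comp_le hp (fun a => φ (f a)) ψ
  simp only [hψ] at this
  exact this

lemma gibbs_term {d db dc : ℝ} (hd : 0 ≤ d) (hdb : d ≤ db) (hdc : d ≤ dc) :
    -(d * Real.logb 2 d) ≤ -(d * Real.logb 2 db) + -(d * Real.logb 2 dc)
      + (db * dc - d) / Real.log 2 := by
  have h2 : 0 < Real.log 2 := Real.log_pos one_lt_two
  rcases eq_or_lt_of_le hd with h | h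
  · have hdb' : 0 ≤ db := h ▸ hdb
    have hdc' : 0 ≤ dc := h ▸ hdc
    rw [← h]
    simp only [neg_zero, zero_mul, mul_zero, neg_zero, zero_add, sub_zero]
    exact div_nonneg (mul_nonneg hdb' hdc') h2.le
  · have hdb0 : 0 < db := lt_of_lt_of_le h hdb
    have hdc0 : 0 < dc := lt_of_lt_of_le h hdc
    have hlog : Real.log (db * dc / d) ≤ db * dc / d - 1 :=
      Real.log_le_sub_one_of_pos (by positivity)
    rw [Real.log_div (by positivity) (ne_of_gt h),
        Real.log_mul (ne_of_gt hdb0) (ne_of_gt hdc0)] at hlog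
    have hnum : d * (Real.log db + Real.log dc - Real.log d) ≤ db * dc - d := by
      have := mul_le_mul_of_nonneg_left hlog hd
      have hdd : d * (db * dc / d - 1) = db * dc - d := by field_simp
      linarith [hdd ▸ this]
    simp only [Real.logb, div_eq_mul_inv]
    have h2i : 0 < (Real.log 2)⁻¹ := by positivity
    have := mul_le_mul_of_nonneg_right hnum (le_of_lt h2i)
    nlinarith [this]

lemma subadd {p : α → ℝ} (hp : ∀ a, 0 ≤ p a) (hp1 : ∑ a, p a = 1)
    (f : α → β) (g : α → γ) :
    H p (fun a => (f a, g a)) ≤ H p f + H p g := by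
  have h2 : 0 < Real.log 2 := Real.log_pos one_lt_two
  set d := dist p (fun a => (f a, g a)) with hdd
  set db := dist p f with hdbd
  set dc := dist p g with hdcd
  have hd0 : ∀ bc, 0 ≤ d bc := dist_nonneg' hp _
  have margb : ∀ b, ∑ c, d (b, c) = db b := dist_marg_fst p f g
  have margc : ∀ c, ∑ b, d (b, c) = dc c := dist_marg_snd p f g
  have hdble : ∀ b c, d (b, c) ≤ db b := fun b c => by
    rw [← margb b]; exact Finset.single_le_sum (fun c _ => hd0 _) (Finset.mem_univ c)
  have hdcle : ∀ b c, d (b, c) ≤ dc c := fun b c => by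
    rw [← margc c]
    exact Finset.single_le_sum (f := fun b => d (b, c)) (fun b _ => hd0 _) (Finset.mem_univ b)
  have hsumdb : ∑ b, db b = 1 := by rw [hdbd, sum_dist, hp1]
  have hsumdc : ∑ c, dc c = 1 := by rw [hdcd, sum_dist, hp1]
  have hsumd : ∑ b, ∑ c, d (b, c) = 1 := by
    rw [← Fintype.sum_prod_type, hdd, sum_dist, hp1]
  have hH : H p (fun a => (f a, g a))
      = ∑ b, ∑ c, -(d (b, c) * Real.logb 2 (d (b, c))) := by
    unfold H; rw [Fintype.sum_prod_type]
  have hHf : H p f = ∑ b, ∑ c, -(d (b, c) * Real.logb 2 (db b)) := by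
    unfold H
    refine Finset.sum_congr rfl fun b _ => ?_
    conv_rhs => rw [Finset.sum_neg_distrib, ← Finset.sum_mul, margb b]
  have hHg : H p g = ∑ b, ∑ c, -(d (b, c) * Real.logb 2 (dc c)) := by
    unfold H
    rw [Finset.sum_comm]
    refine Finset.sum_congr rfl fun c _ => ?_
    conv_rhs => rw [Finset.sum_neg_distrib, ← Finset.sum_mul, margc c]
  have hzero : ∑ b, ∑ c, (db b * dc c - d (b, c)) / Real.log 2 = 0 := by
    have h1 : ∑ b, ∑ c, db b * dc c = 1 := by
      rw [← Finset.sum_mul_sum]  -- check form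
      rw [hsumdb, hsumdc, one_mul]
    have hrw : ∀ (x y : ℝ), (x - y) / Real.log 2
        = x * (Real.log 2)⁻¹ - y * (Real.log 2)⁻¹ := fun x y => by ring
    simp_rw [hrw, Finset.sum_sub_distrib, ← Finset.sum_mul]
    rw [h1, hsumd, sub_self]
  rw [hH, hHf, hHg]
  calc ∑ b, ∑ c, -(d (b, c) * Real.logb 2 (d (b, c)))
      ≤ ∑ b, ∑ c, (-(d (b, c) * Real.logb 2 (db b)) + -(d (b, c) * Real.logb 2 (dc c))
          + (db b * dc c - d (b, c)) / Real.log 2) := by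
        refine Finset.sum_le_sum fun b _ => Finset.sum_le_sum fun c _ => ?_
        exact gibbs_term (hd0 _) (hdble b c) (hdcle b c)
    _ = (∑ b, ∑ c, -(d (b, c) * Real.logb 2 (db b)))
        + (∑ b, ∑ c, -(d (b, c) * Real.logb 2 (dc c)))
        + ∑ b, ∑ c, (db b * dc c - d (b, c)) / Real.log 2 := by
        simp_rw [Finset.sum_add_distrib]
    _ = (∑ b, ∑ c, -(d (b, c) * Real.logb 2 (db b)))
        + (∑ b, ∑ c, -(d (b, c) * Real.logb 2 (dc c))) := by rw [hzero, add_zero]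
end Helpers

section ProdSplit
variable {α₁ α₂ A β₁ β₂ β : Type} [Fintype α₁] [Fintype α₂] [Fintype A]
  [Fintype β₁] [Fintype β₂] [Fintype β]

lemma dist_split (q₁ : α₁ → ℝ) (q₂ : α₂ → ℝ) (e : α₁ × α₂ ≃ A)
    (g : A → β) (g₁ : α₁ → β₁) (g₂ : α₂ → β₂) (σ : β₁ × β₂ ≃ β)
    (hg : ∀ a₁ a₂, g (e (a₁, a₂)) = σ (g₁ a₁, g₂ a₂)) (b₁ : β₁) (b₂ : β₂) :
    dist (fun a => q₁ (e.symm a).1 * q₂ (e.symm a).2) g (σ (b₁, b₂)) =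
      dist q₁ g₁ b₁ * dist q₂ g₂ b₂ := by
  unfold dist
  rw [← Equiv.sum_comp e (fun a => if g a = σ (b₁, b₂)
      then q₁ (e.symm a).1 * q₂ (e.symm a).2 else 0)]
  rw [Fintype.sum_prod_type, Finset.sum_mul_sum]
  refine Finset.sum_congr rfl fun a₁ _ => Finset.sum_congr rfl fun a₂ _ => ?_
  rw [hg, Equiv.symm_apply_apply]
  by_cases h1 : g₁ a₁ = b₁ <;> by_cases h2 : g₂ a₂ = b₂ <;>
    simp [σ.injective.eq_iff, Prod.ext_iff, h1, h2]

lemma F_mul (s t : ℝ) : -(s * t * Real.logb 2 (s * t))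
    = t * -(s * Real.logb 2 s) + s * -(t * Real.logb 2 t) := by
  by_cases hs : s = 0
  · simp [hs]
  by_cases ht : t = 0
  · simp [ht]
  rw [Real.logb_mul hs ht]; ring

lemma H_split (q₁ : α₁ → ℝ) (q₂ : α₂ → ℝ) (hq₁ : ∑ a, q₁ a = 1) (hq₂ : ∑ a, q₂ a = 1)
    (e : α₁ × α₂ ≃ A) (g : A → β) (g₁ : α₁ → β₁) (g₂ : α₂ → β₂) (σ : β₁ × β₂ ≃ β)
    (hg : ∀ a₁ a₂, g (e (a₁, a₂)) = σ (g₁ a₁, g₂ a₂)) :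
    H (fun a => q₁ (e.symm a).1 * q₂ (e.symm a).2) g = H q₁ g₁ + H q₂ g₂ := by
  set q : A → ℝ := fun a => q₁ (e.symm a).1 * q₂ (e.symm a).2 with hq
  have hd : ∀ b₁ b₂, dist q g (σ (b₁, b₂)) = dist q₁ g₁ b₁ * dist q₂ g₂ b₂ :=
    dist_split q₁ q₂ e g g₁ g₂ σ hg
  unfold H
  rw [← Equiv.sum_comp σ (fun b => -(dist q g b * Real.logb 2 (dist q g b))),
    Fintype.sum_prod_type]
  have : ∀ b₁ b₂, -(dist q g (σ (b₁, b₂)) * Real.logb 2 (dist q g (σ (b₁, b₂))))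
      = dist q₂ g₂ b₂ * -(dist q₁ g₁ b₁ * Real.logb 2 (dist q₁ g₁ b₁))
        + dist q₁ g₁ b₁ * -(dist q₂ g₂ b₂ * Real.logb 2 (dist q₂ g₂ b₂)) := by
    intro b₁ b₂; rw [hd b₁ b₂]; exact F_mul _ _
  simp_rw [this, Finset.sum_add_distrib, ← Finset.mul_sum, ← Finset.sum_mul]
  rw [sum_dist, sum_dist, hq₁, hq₂]
  ring_nf
end ProdSplit

section Concrete
variable {X Y U : Type} [Fintype X] [Fintype Y] [Fintype U]

lemma dist_reindex {α' α β : Type} [Fintype α'] [Fintype α] (e : α' ≃ α)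
    (p : α → ℝ) (f : α → β) (b : β) :
    dist (fun a => p (e a)) (fun a => f (e a)) b = dist p f b := by
  unfold dist
  exact Equiv.sum_comp e (fun a => if f a = b then p a else 0)

lemma H_reindex {α' α β : Type} [Fintype α'] [Fintype α] [Fintype β] (e : α' ≃ α)
    (p : α → ℝ) (f : α → β) :
    H (fun a => p (e a)) (fun a => f (e a)) = H p f := by
  unfold H
  exact Finset.sum_congr rfl fun b _ => by rw [dist_reindex]

/-- bound on conditional mutual information. -/
lemma Ic_le_card (q : X × Y × U → ℝ) (hq : IsPMF q) :
    Ic q cX cY cU ≤ 2 * (Fintype.card X : ℝ) := by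
  obtain ⟨hq0, hq1⟩ := hq
  have h1 : H q (fun a => (cX a, cU a)) ≤ H q cX + H q cU := subadd hq0 hq1 cX cU
  have h2 : H q (fun a => (cY a, cU a)) ≤ H q (fun a => ((cX a, cY a), cU a)) :=
    H_comp_le hq0 (fun a => ((cX a, cY a), cU a)) (fun p => (p.1.2, p.2))
  have h3 : H q cX ≤ 2 * (Fintype.card X : ℝ) := H_le_card hq0 cX
  simp only [Ic, Hc]
  linarith

lemma isPMF_of_isAux {p : X × Y → ℝ} {q : X × Y × U → ℝ} (h : IsAux p q) : IsPMF p := by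
  obtain ⟨⟨hq0, hq1⟩, hmarg⟩ := h
  constructor
  · intro xy
    rw [← hmarg xy.1 xy.2]
    exact Finset.sum_nonneg fun u _ => hq0 _
  · have : ∑ a : X × Y × U, q a = ∑ xy : X × Y, p xy := by
      rw [Fintype.sum_prod_type (f := fun a : X × Y × U => q a)]
      rw [Fintype.sum_prod_type (f := fun xy : X × Y => p xy)]
      refine Finset.sum_congr rfl fun x _ => ?_
      rw [Fintype.sum_prod_type (f := fun a : Y × U => q (x, a))]
      exact Finset.sum_congr rfl fun y _ => hmarg x y
    rw [← this, hq1]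

lemma bddAbove_NNI (p : X × Y → ℝ) :
    BddAbove { r | ∃ (U : Type) (_ : Fintype U) (q : X × Y × U → ℝ), IsAux p q ∧
      r = Ic q cX cY cU - I2 p Prod.fst Prod.snd } := by
  refine ⟨2 * (Fintype.card X : ℝ), fun r hr => ?_⟩
  obtain ⟨V, _, q, haux, rfl⟩ := hr
  have hpf := isPMF_of_isAux haux
  have hI2 : 0 ≤ I2 p Prod.fst Prod.snd := by
    have := subadd hpf.1 hpf.2 (Prod.fst : X × Y → X) Prod.snd
    unfold I2
    linarith
  have := Ic_le_card q haux.1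
  linarith

/-- the trivial (constant) auxiliary variable. -/
def e0 : X × Y × Unit ≃ X × Y where
  toFun a := (a.1, a.2.1)
  invFun b := (b.1, b.2, ())
  left_inv _ := rfl
  right_inv _ := rfl

lemma zero_mem_PPI (p : X × Y → ℝ) (hp : IsPMF p) :
    (0 : ℝ) ∈ { r | ∃ (U : Type) (_ : Fintype U) (q : X × Y × U → ℝ), IsAux p q ∧
      Indep q cU cX ∧ Indep q cU cY ∧ r = Ic q cX cY cU - I2 p Prod.fst Prod.snd } := by
  classical
  set q : X × Y × Unit → ℝ := fun a => p (e0 a) with hqdef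
  have hq0 : ∀ a, 0 ≤ q a := fun a => hp.1 _
  have hq1 : ∑ a, q a = 1 := by
    rw [hqdef]
    rw [Equiv.sum_comp e0 p]
    exact hp.2
  have hdU : ∀ u : Unit, dist q cU u = 1 := by
    intro u
    unfold dist
    exact (Finset.sum_congr rfl fun a _ => if_pos (Subsingleton.elim _ _)).trans hq1
  have hHU : H q cU = 0 := by
    unfold H
    have : ∀ u : Unit, -(dist q cU u * Real.logb 2 (dist q cU u)) = 0 := by
      intro u; rw [hdU u]; simp
    simp_rw [this]
    simp
  have hHX : H q (fun a => (cX a, cU a)) = H p Prod.fst := by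
    have h1 : H q (fun a => (cX a, cU a))
        = H p (fun b : X × Y => (b.1, ())) :=
      H_reindex e0 p (fun b : X × Y => (b.1, ()))
    rw [h1]
    exact H_comp_eq hp.1 Prod.fst (fun x => (x, ())) Prod.fst (fun _ => rfl)
  have hHY : H q (fun a => (cY a, cU a)) = H p Prod.snd := by
    have h1 : H q (fun a => (cY a, cU a))
        = H p (fun b : X × Y => (b.2, ())) :=
      H_reindex e0 p (fun b : X × Y => (b.2, ()))
    rw [h1]
    exact H_comp_eq hp.1 Prod.snd (fun y => (y, ())) Prod.fst (fun _ => rfl)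
  have hHXY : H q (fun a => ((cX a, cY a), cU a))
      = H p (fun a => (Prod.fst a, Prod.snd a)) := by
    have h1 : H q (fun a => ((cX a, cY a), cU a))
        = H p (fun b : X × Y => (b, ())) :=
      H_reindex e0 p (fun b : X × Y => (b, ()))
    rw [h1]
    exact H_comp_eq hp.1 (fun a : X × Y => (Prod.fst a, Prod.snd a))
      (fun xy => (xy, ())) Prod.fst (fun _ => rfl)
  have hIndX : Indep q cU cX := by
    intro u x
    have h1 : dist q (fun a => (cU a, cX a)) (u, x) = dist q cX x := by
      unfold dist
      refine Finset.sum_congr rfl fun a _ => ?_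
      simp [Prod.ext_iff, eq_iff_true_of_subsingleton]
    rw [h1, hdU, one_mul]
  have hIndY : Indep q cU cY := by
    intro u y
    have h1 : dist q (fun a => (cU a, cY a)) (u, y) = dist q cY y := by
      unfold dist
      refine Finset.sum_congr rfl fun a _ => ?_
      simp [Prod.ext_iff, eq_iff_true_of_subsingleton]
    rw [h1, hdU, one_mul]
  have hdX : dist q cX = dist p Prod.fst := funext fun x => dist_reindex e0 p Prod.fst x
  have hdY : dist q cY = dist p Prod.snd := funext fun y => dist_reindex e0 p Prod.snd y
  refine ⟨Unit, inferInstance, q, ⟨⟨hq0, hq1⟩, fun x y => ?_⟩, hIndX, hIndY, ?_⟩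
  · show (∑ _u : Unit, p (x, y)) = p (x, y)
    simp
  · simp only [Ic, Hc, I2, hHX, hHY, hHXY, hHU]
    ring
end Concrete

section Big
variable {X₁ Y₁ U₁ X₂ Y₂ U₂ : Type} [Fintype X₁] [Fintype Y₁] [Fintype U₁]
  [Fintype X₂] [Fintype Y₂] [Fintype U₂]

def eA : (X₁ × Y₁ × U₁) × (X₂ × Y₂ × U₂) ≃ (X₁ × X₂) × (Y₁ × Y₂) × (U₁ × U₂) where
  toFun a := ((a.1.1, a.2.1), (a.1.2.1, a.2.2.1), (a.1.2.2, a.2.2.2))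
  invFun b := ((b.1.1, b.2.1.1, b.2.2.1), (b.1.2, b.2.1.2, b.2.2.2))
  left_inv _ := rfl
  right_inv _ := rfl

def eP {A₁ B₁ A₂ B₂ : Type} : (A₁ × B₁) × (A₂ × B₂) ≃ (A₁ × A₂) × (B₁ × B₂) where
  toFun a := ((a.1.1, a.2.1), (a.1.2, a.2.2))
  invFun b := ((b.1.1, b.2.1), (b.1.2, b.2.2))
  left_inv _ := rfl
  right_inv _ := rfl

def eT : ((X₁ × Y₁) × U₁) × ((X₂ × Y₂) × U₂) ≃ ((X₁ × X₂) × (Y₁ × Y₂)) × (U₁ × U₂) where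
  toFun a := (((a.1.1.1, a.2.1.1), (a.1.1.2, a.2.1.2)), (a.1.2, a.2.2))
  invFun b := (((b.1.1.1, b.1.2.1), b.2.1), ((b.1.1.2, b.1.2.2), b.2.2))
  left_inv _ := rfl
  right_inv _ := rfl

variable (q₁ : X₁ × Y₁ × U₁ → ℝ) (q₂ : X₂ × Y₂ × U₂ → ℝ)

/-- the product auxiliary joint pmf. -/
def bigq : (X₁ × X₂) × (Y₁ × Y₂) × (U₁ × U₂) → ℝ :=
  fun a => q₁ (eA.symm a).1 * q₂ (eA.symm a).2

lemma key (p₁ : X₁ × Y₁ → ℝ) (p₂ : X₂ × Y₂ → ℝ) (h₁ : IsPMF p₁) (h₂ : IsPMF p₂)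
    (ha₁ : IsAux p₁ q₁) (ha₂ : IsAux p₂ q₂) :
    IsAux (fun a : (X₁ × X₂) × (Y₁ × Y₂) => p₁ (a.1.1, a.2.1) * p₂ (a.1.2, a.2.2))
      (bigq q₁ q₂) ∧
    Ic (bigq q₁ q₂) cX cY cU -
      I2 (fun a : (X₁ × X₂) × (Y₁ × Y₂) => p₁ (a.1.1, a.2.1) * p₂ (a.1.2, a.2.2))
        Prod.fst Prod.snd
      = (Ic q₁ cX cY cU - I2 p₁ Prod.fst Prod.snd)
        + (Ic q₂ cX cY cU - I2 p₂ Prod.fst Prod.snd) := by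
  obtain ⟨⟨hq₁0, hq₁1⟩, hm₁⟩ := ha₁
  obtain ⟨⟨hq₂0, hq₂1⟩, hm₂⟩ := ha₂
  constructor
  · refine ⟨⟨fun a => mul_nonneg (hq₁0 _) (hq₂0 _), ?_⟩, fun x y => ?_⟩
    · rw [show (∑ a, bigq q₁ q₂ a)
          = ∑ a : (X₁ × Y₁ × U₁) × (X₂ × Y₂ × U₂), q₁ a.1 * q₂ a.2 from
          (Equiv.sum_comp eA (fun a => bigq q₁ q₂ a)).symm]
      rw [Fintype.sum_prod_type, ← Finset.sum_mul_sum, hq₁1, hq₂1, one_mul]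
    · have : ∀ u : U₁ × U₂, bigq q₁ q₂ (x, y, u)
          = q₁ (x.1, y.1, u.1) * q₂ (x.2, y.2, u.2) := fun u => rfl
      simp_rw [this]
      rw [Fintype.sum_prod_type]
      dsimp only
      rw [← Finset.sum_mul_sum, hm₁, hm₂]
  · have e1 : H (bigq q₁ q₂) (fun a => (cX a, cU a))
        = H q₁ (fun a => (cX a, cU a)) + H q₂ (fun a => (cX a, cU a)) :=
      H_split q₁ q₂ hq₁1 hq₂1 eA _ _ _ eP (fun _ _ => rfl)
    have e2 : H (bigq q₁ q₂) (fun a => (cY a, cU a))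
        = H q₁ (fun a => (cY a, cU a)) + H q₂ (fun a => (cY a, cU a)) :=
      H_split q₁ q₂ hq₁1 hq₂1 eA _ _ _ eP (fun _ _ => rfl)
    have e3 : H (bigq q₁ q₂) (fun a => ((cX a, cY a), cU a))
        = H q₁ (fun a => ((cX a, cY a), cU a)) + H q₂ (fun a => ((cX a, cY a), cU a)) :=
      H_split q₁ q₂ hq₁1 hq₂1 eA _ _ _ eT (fun _ _ => rfl)
    have e4 : H (bigq q₁ q₂) cU = H q₁ cU + H q₂ cU :=
      H_split q₁ q₂ hq₁1 hq₂1 eA cU cU cU (Equiv.refl _) (fun _ _ => rfl)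
    have e5 : H (fun a : (X₁ × X₂) × (Y₁ × Y₂) => p₁ (a.1.1, a.2.1) * p₂ (a.1.2, a.2.2))
          Prod.fst = H p₁ Prod.fst + H p₂ Prod.fst :=
      H_split p₁ p₂ h₁.2 h₂.2 eP Prod.fst Prod.fst Prod.fst (Equiv.refl _) (fun _ _ => rfl)
    have e6 : H (fun a : (X₁ × X₂) × (Y₁ × Y₂) => p₁ (a.1.1, a.2.1) * p₂ (a.1.2, a.2.2))
          Prod.snd = H p₁ Prod.snd + H p₂ Prod.snd :=
      H_split p₁ p₂ h₁.2 h₂.2 eP Prod.snd Prod.snd Prod.snd (Equiv.refl _) (fun _ _ => rfl)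
    have e7 : H (fun a : (X₁ × X₂) × (Y₁ × Y₂) => p₁ (a.1.1, a.2.1) * p₂ (a.1.2, a.2.2))
          (fun a => (Prod.fst a, Prod.snd a))
        = H p₁ (fun a => (Prod.fst a, Prod.snd a)) + H p₂ (fun a => (Prod.fst a, Prod.snd a)) :=
      H_split p₁ p₂ h₁.2 h₂.2 eP _ _ _ eP (fun _ _ => rfl)
    simp only [Ic, Hc, I2, e1, e2, e3, e4, e5, e6, e7]
    ring

lemma indep_split_X (hi₁ : Indep q₁ cU cX) (hi₂ : Indep q₂ cU cX) :
    Indep (bigq q₁ q₂) cU cX := by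
  intro u x
  have h1 : dist (bigq q₁ q₂) (fun a => (cU a, cX a)) (u, x)
      = dist q₁ (fun a => (cU a, cX a)) (u.1, x.1)
        * dist q₂ (fun a => (cU a, cX a)) (u.2, x.2) :=
    dist_split q₁ q₂ eA _ _ _ eP (fun _ _ => rfl) (u.1, x.1) (u.2, x.2)
  have h2 : dist (bigq q₁ q₂) cU u = dist q₁ cU u.1 * dist q₂ cU u.2 :=
    dist_split q₁ q₂ eA cU cU cU (Equiv.refl _) (fun _ _ => rfl) u.1 u.2
  have h3 : dist (bigq q₁ q₂) cX x = dist q₁ cX x.1 * dist q₂ cX x.2 :=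
    dist_split q₁ q₂ eA cX cX cX (Equiv.refl _) (fun _ _ => rfl) x.1 x.2
  rw [h1, hi₁ u.1 x.1, hi₂ u.2 x.2, h2, h3]
  ring

lemma indep_split_Y (hi₁ : Indep q₁ cU cY) (hi₂ : Indep q₂ cU cY) :
    Indep (bigq q₁ q₂) cU cY := by
  intro u y
  have h1 : dist (bigq q₁ q₂) (fun a => (cU a, cY a)) (u, y)
      = dist q₁ (fun a => (cU a, cY a)) (u.1, y.1)
        * dist q₂ (fun a => (cU a, cY a)) (u.2, y.2) :=
    dist_split q₁ q₂ eA _ _ _ eP (fun _ _ => rfl) (u.1, y.1) (u.2, y.2)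
  have h2 : dist (bigq q₁ q₂) cU u = dist q₁ cU u.1 * dist q₂ cU u.2 :=
    dist_split q₁ q₂ eA cU cU cU (Equiv.refl _) (fun _ _ => rfl) u.1 u.2
  have h3 : dist (bigq q₁ q₂) cY y = dist q₁ cY y.1 * dist q₂ cY y.2 :=
    dist_split q₁ q₂ eA cY cY cY (Equiv.refl _) (fun _ _ => rfl) y.1 y.2
  rw [h1, hi₁ u.1 y.1, hi₂ u.2 y.2, h2, h3]
  ring
end Big

lemma sSup_add_le {S₁ S₂ S : Set ℝ} (h₁ : S₁.Nonempty) (h₂ : S₂.Nonempty)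
    (hS : BddAbove S) (h : ∀ r₁ ∈ S₁, ∀ r₂ ∈ S₂, r₁ + r₂ ∈ S) :
    sSup S₁ + sSup S₂ ≤ sSup S := by
  have key : sSup S₁ ≤ sSup S - sSup S₂ := by
    refine csSup_le h₁ fun r₁ hr₁ => ?_
    have : sSup S₂ ≤ sSup S - r₁ := by
      refine csSup_le h₂ fun r₂ hr₂ => ?_
      have := le_csSup hS (h r₁ hr₁ r₂ hr₂)
      linarith
    linarith
  linarith

/-- superadditivity of `G_NNI`, `G_PNI` and `G_PPI` for independent pairs
(the joint pmf of `((X₁,X₂),(Y₁,Y₂))` is the product of the pmfs of `(X₁,Y₁)`,`(X₂,Y₂)`). -/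
theorem stmt17 {X₁ Y₁ X₂ Y₂ : Type} [Fintype X₁] [Fintype Y₁] [Fintype X₂] [Fintype Y₂]
    (p₁ : X₁ × Y₁ → ℝ) (p₂ : X₂ × Y₂ → ℝ) (h₁ : IsPMF p₁) (h₂ : IsPMF p₂) :
    GNNI p₁ + GNNI p₂ ≤
        GNNI (fun a : (X₁ × X₂) × (Y₁ × Y₂) => p₁ (a.1.1, a.2.1) * p₂ (a.1.2, a.2.2)) ∧
    GPNI p₁ + GPNI p₂ ≤
        GPNI (fun a : (X₁ × X₂) × (Y₁ × Y₂) => p₁ (a.1.1, a.2.1) * p₂ (a.1.2, a.2.2)) ∧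
    GPPI p₁ + GPPI p₂ ≤
        GPPI (fun a : (X₁ × X₂) × (Y₁ × Y₂) => p₁ (a.1.1, a.2.1) * p₂ (a.1.2, a.2.2)) := by
  have z₁ := zero_mem_PPI p₁ h₁
  have z₂ := zero_mem_PPI p₂ h₂
  obtain ⟨V₁, iV₁, t₁, hat₁, hiX₁, hiY₁, ht₁⟩ := z₁
  obtain ⟨V₂, iV₂, t₂, hat₂, hiX₂, hiY₂, ht₂⟩ := z₂
  refine ⟨?_, ?_, ?_⟩
  · unfold GNNI
    refine sSup_add_le ⟨0, V₁, iV₁, t₁, hat₁, ht₁⟩ ⟨0, V₂, iV₂, t₂, hat₂, ht₂⟩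
      (bddAbove_NNI _) ?_
    rintro r₁ ⟨W₁, iW₁, s₁, ha₁, rfl⟩ r₂ ⟨W₂, iW₂, s₂, ha₂, rfl⟩
    exact ⟨W₁ × W₂, inferInstance, bigq s₁ s₂, (key s₁ s₂ p₁ p₂ h₁ h₂ ha₁ ha₂).1,
      ((key s₁ s₂ p₁ p₂ h₁ h₂ ha₁ ha₂).2).symm⟩
  · unfold GPNI
    refine sSup_add_le ⟨0, V₁, iV₁, t₁, hat₁, hiX₁, ht₁⟩ ⟨0, V₂, iV₂, t₂, hat₂, hiX₂, ht₂⟩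
      (BddAbove.mono ?_
        (bddAbove_NNI (fun a : (X₁ × X₂) × (Y₁ × Y₂) => p₁ (a.1.1, a.2.1) * p₂ (a.1.2, a.2.2)))) ?_
    · rintro r ⟨W, iW, s, ha, _, hr⟩
      exact ⟨W, iW, s, ha, hr⟩
    rintro r₁ ⟨W₁, iW₁, s₁, ha₁, hi₁, rfl⟩ r₂ ⟨W₂, iW₂, s₂, ha₂, hi₂, rfl⟩
    exact ⟨W₁ × W₂, inferInstance, bigq s₁ s₂, (key s₁ s₂ p₁ p₂ h₁ h₂ ha₁ ha₂).1,
      indep_split_X s₁ s₂ hi₁ hi₂,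
      ((key s₁ s₂ p₁ p₂ h₁ h₂ ha₁ ha₂).2).symm⟩
  · unfold GPPI
    refine sSup_add_le ⟨0, V₁, iV₁, t₁, hat₁, hiX₁, hiY₁, ht₁⟩
      ⟨0, V₂, iV₂, t₂, hat₂, hiX₂, hiY₂, ht₂⟩
      (BddAbove.mono ?_
        (bddAbove_NNI (fun a : (X₁ × X₂) × (Y₁ × Y₂) => p₁ (a.1.1, a.2.1) * p₂ (a.1.2, a.2.2)))) ?_
    · rintro r ⟨W, iW, s, ha, _, _, hr⟩
      exact ⟨W, iW, s, ha, hr⟩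
    rintro r₁ ⟨W₁, iW₁, s₁, ha₁, hiX₁', hiY₁', rfl⟩ r₂ ⟨W₂, iW₂, s₂, ha₂, hiX₂', hiY₂', rfl⟩
    exact ⟨W₁ × W₂, inferInstance, bigq s₁ s₂, (key s₁ s₂ p₁ p₂ h₁ h₂ ha₁ ha₂).1,
      indep_split_X s₁ s₂ hiX₁' hiX₂', indep_split_Y s₁ s₂ hiY₁' hiY₂',
      ((key s₁ s₂ p₁ p₂ h₁ h₂ ha₁ ha₂).2).symm⟩

end GW
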